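/- There is no K_{3,3}-free latin square of order 4; equivalently, every latin square of order 4 contains rows r1,r2,r3, columns c1,c2,c3, and letters l1,l2,l3 such that all six triples (r1,c2,l3), (r2,c3,l1), (r3,c1,l2), (r2,c1,l3), (r3,c2,l1), (r1,c3,l2) belong to the square. -/
import Mathlib


/-- A latin square of order `n` as a function: each row and each column is injective. -/
def IsLatin {n : ℕ} (L : Fin n → Fin n → Fin n) : Prop :=
  (∀ r, Function.Injective (L r)) ∧ (∀ c, Function.Injective (fun r => L r c))

abbrev pat3 (M : Fin 4 → Fin 4 → Fin 4) : Prop :=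
  ∃ r1 r2 r3 c1 c2 c3 : Fin 4,
      r1 ≠ r2 ∧ r1 ≠ r3 ∧ r2 ≠ r3 ∧
      c1 ≠ c2 ∧ c1 ≠ c3 ∧ c2 ≠ c3 ∧
      M r2 c3 ≠ M r3 c1 ∧ M r2 c3 ≠ M r1 c2 ∧ M r3 c1 ≠ M r1 c2 ∧
      M r2 c1 = M r1 c2 ∧ M r3 c2 = M r2 c3 ∧ M r1 c3 = M r3 c1

set_option synthInstance.maxSize 2000 in
set_option synthInstance.maxHeartbeats 2000000 in
set_option maxHeartbeats 4000000 in
set_option maxRecDepth 100000 in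
theorem key : ∀ g1 : Fin 4 → Fin 4,
    (Function.Injective g1 ∧ ∀ c, g1 c ≠ c) →
    ∀ g2 : Fin 4 → Fin 4,
    (Function.Injective g2 ∧ (∀ c, g2 c ≠ c) ∧ (∀ c, g2 c ≠ g1 c)) →
    ∀ g3 : Fin 4 → Fin 4,
    (Function.Injective g3 ∧ (∀ c, g3 c ≠ c) ∧ (∀ c, g3 c ≠ g1 c) ∧ (∀ c, g3 c ≠ g2 c)) →
    pat3 ![id, g1, g2, g3] := by decide

/-- Every latin square of order 4 contains a `K_{3,3}` pattern. -/
theorem stmt7 (L : Fin 4 → Fin 4 → Fin 4) (hL : IsLatin L) :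
    ∃ r1 r2 r3 c1 c2 c3 l1 l2 l3 : Fin 4,
      r1 ≠ r2 ∧ r1 ≠ r3 ∧ r2 ≠ r3 ∧
      c1 ≠ c2 ∧ c1 ≠ c3 ∧ c2 ≠ c3 ∧
      l1 ≠ l2 ∧ l1 ≠ l3 ∧ l2 ≠ l3 ∧
      L r1 c2 = l3 ∧ L r2 c3 = l1 ∧ L r3 c1 = l2 ∧
      L r2 c1 = l3 ∧ L r3 c2 = l1 ∧ L r1 c3 = l2 := by
  obtain ⟨hrow, hcol⟩ := hL
  have hbij : Function.Bijective (L 0) := (Finite.injective_iff_bijective).mp (hrow 0)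
  let e : Fin 4 ≃ Fin 4 := Equiv.ofBijective _ hbij
  set g : Fin 4 → Fin 4 → Fin 4 := fun r c => e.symm (L r c) with hg
  -- column injectivity transfers
  have hgne : ∀ (r r' : Fin 4), r ≠ r' → ∀ c, g r c ≠ g r' c := by
    intro r r' hrr c h
    exact hrr (hcol c (e.symm.injective h))
  have h0 : ∀ c, g 0 c = c := fun c => e.symm_apply_apply c
  have hginj : ∀ r, Function.Injective (g r) :=
    fun r => e.symm.injective.comp (hrow r)
  have key' := key (g 1) ⟨hginj 1, fun c => by
      have := hgne 1 0 (by decide) c; rwa [h0] at this⟩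
    (g 2) ⟨hginj 2, fun c => by have := hgne 2 0 (by decide) c; rwa [h0] at this,
      fun c => hgne 2 1 (by decide) c⟩
    (g 3) ⟨hginj 3, fun c => by have := hgne 3 0 (by decide) c; rwa [h0] at this,
      fun c => hgne 3 1 (by decide) c, fun c => hgne 3 2 (by decide) c⟩
  have hM : ∀ r c, (![id, g 1, g 2, g 3] : Fin 4 → Fin 4 → Fin 4) r c = g r c := by
    intro r c
    fin_cases r
    · exact (h0 c).symm
    · rfl
    · rfl
    · rfl
  obtain ⟨r1, r2, r3, c1, c2, c3, h12, h13, h23, k12, k13, k23, n1, n2, n3, e1, e2, e3⟩ := key'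
  simp only [hM] at n1 n2 n3 e1 e2 e3
  have inj := e.symm.injective
  exact ⟨r1, r2, r3, c1, c2, c3, L r2 c3, L r3 c1, L r1 c2,
    h12, h13, h23, k12, k13, k23,
    fun h => n1 (congrArg e.symm h),
    fun h => n2 (congrArg e.symm h),
    fun h => n3 (congrArg e.symm h),
    rfl, rfl, rfl, inj e1, inj e2, inj e3⟩
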